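/- arXiv:1503.00506 — 3 statements merged into one kernel-verified Lean document; each statement's English description precedes it below -/
import Mathlib

section
/- Let ρ be a nonzero Hermitian operator on a finite-dimensional complex Hilbert space, k ≥ 1, and v a Hermitian operator. If ∑_{j=1}^{k} ρ^{⊗(j−1)} ⊗ v ⊗ ρ^{⊗(k−j)} = 0, then v = 0. Consequently, the map ρ ↦ ρ^{⊗k} is an immersion on Herm(H) \ {0}. -/
/-- The mixed tensor `ρ^{⊗(j−1)} ⊗ v ⊗ ρ^{⊗(k−j)}` summed over `j`, with index type
`Fin k → Fin d` (the `j`-th tensor factor carrying `v`, all others `ρ`). -/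
noncomputable def mixedTensorSum {d : ℕ} (k : ℕ) (ρ v : Matrix (Fin d) (Fin d) ℂ) :
    Matrix (Fin k → Fin d) (Fin k → Fin d) ℂ :=
  Matrix.of fun x y =>
    ∑ j : Fin k, (∏ l ∈ Finset.univ.erase j, ρ (x l) (y l)) * v (x j) (y j)

/-- A double sum over function tuples of a product factorizes. -/
lemma factor_sum {d k : ℕ} (g : Fin k → Fin d → Fin d → ℂ) :
    ∑ x : Fin k → Fin d, ∑ y : Fin k → Fin d, ∏ l, g l (x l) (y l)
      = ∏ l, ∑ a, ∑ b, g l a b := by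
  have h1 : ∀ l : Fin k, (∑ a, ∑ b, g l a b) = ∑ p : Fin d × Fin d, g l p.1 p.2 := fun l =>
    (Fintype.sum_prod_type (fun p : Fin d × Fin d => g l p.1 p.2)).symm
  simp_rw [h1]
  rw [Fintype.prod_sum]
  rw [← Fintype.sum_prod_type (fun p : (Fin k → Fin d) × (Fin k → Fin d) =>
        ∏ l, g l (p.1 l) (p.2 l))]
  exact Fintype.sum_equiv (Equiv.arrowProdEquivProdArrow (Fin k) (fun _ => Fin d) (fun _ => Fin d)).symm
    _ _ (fun p => rfl)

/-- Swap a triple sum to bring the inner index out. -/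
lemma triple_swap {α β γ : Type*} [Fintype α] [Fintype β] [Fintype γ]
    (f : α → β → γ → ℂ) :
    ∑ x : α, ∑ y : β, ∑ j : γ, f x y j = ∑ j : γ, ∑ x : α, ∑ y : β, f x y j := by
  calc ∑ x : α, ∑ y : β, ∑ j : γ, f x y j
      = ∑ x : α, ∑ j : γ, ∑ y : β, f x y j :=
        Finset.sum_congr rfl fun x _ => Finset.sum_comm
    _ = ∑ j : γ, ∑ x : α, ∑ y : β, f x y j := Finset.sum_comm

/-- Contraction of the mixed tensor sum with `M^{⊗k}`. -/
lemma mixedTensorSum_contract {d k : ℕ} (ρ v M : Matrix (Fin d) (Fin d) ℂ) :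
    ∑ x : Fin k → Fin d, ∑ y : Fin k → Fin d,
        mixedTensorSum k ρ v x y * ∏ l, M (y l) (x l)
      = (k : ℂ) * (∑ a, ∑ b, ρ a b * M b a) ^ (k - 1) * (∑ a, ∑ b, v a b * M b a) := by
  classical
  unfold mixedTensorSum
  simp only [Matrix.of_apply, Finset.sum_mul]
  refine (triple_swap _).trans ?_
  have key : ∀ j : Fin k,
      (∑ x : Fin k → Fin d, ∑ y : Fin k → Fin d,
        (∏ l ∈ Finset.univ.erase j, ρ (x l) (y l)) * v (x j) (y j) * ∏ l, M (y l) (x l))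
      = (∑ a, ∑ b, ρ a b * M b a) ^ (k - 1) * (∑ a, ∑ b, v a b * M b a) := by
    intro j
    have hterm : ∀ x y : Fin k → Fin d,
        (∏ l ∈ Finset.univ.erase j, ρ (x l) (y l)) * v (x j) (y j) * ∏ l, M (y l) (x l)
        = ∏ l, ((if l = j then v (x l) (y l) else ρ (x l) (y l)) * M (y l) (x l)) := by
      intro x y
      rw [← Finset.mul_prod_erase Finset.univ
            (fun l => (if l = j then v (x l) (y l) else ρ (x l) (y l)) * M (y l) (x l))
            (Finset.mem_univ j),
          ← Finset.mul_prod_erase Finset.univ (fun l => M (y l) (x l)) (Finset.mem_univ j),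
          Finset.prod_mul_distrib]
      have hif : ∏ l ∈ Finset.univ.erase j,
          (if l = j then v (x l) (y l) else ρ (x l) (y l))
          = ∏ l ∈ Finset.univ.erase j, ρ (x l) (y l) :=
        Finset.prod_congr rfl fun l hl => if_neg (Finset.ne_of_mem_erase hl)
      rw [hif]
      simp only [if_true]
      ring
    simp_rw [hterm]
    rw [factor_sum (fun l a b => (if l = j then v a b else ρ a b) * M b a)]
    have hfac : ∀ l : Fin k,
        (∑ a, ∑ b, (if l = j then v a b else ρ a b) * M b a)
        = if l = j then (∑ a, ∑ b, v a b * M b a) else (∑ a, ∑ b, ρ a b * M b a) := by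
      intro l
      by_cases hl : l = j <;> simp [hl]
    simp_rw [hfac]
    rw [← Finset.mul_prod_erase Finset.univ _ (Finset.mem_univ j)]
    have hif2 : ∏ l ∈ Finset.univ.erase j,
        (if l = j then (∑ a, ∑ b, v a b * M b a) else (∑ a, ∑ b, ρ a b * M b a))
        = ∏ _l ∈ Finset.univ.erase j, (∑ a, ∑ b, ρ a b * M b a) :=
      Finset.prod_congr rfl fun l hl => if_neg (Finset.ne_of_mem_erase hl)
    rw [hif2, Finset.prod_const, Finset.card_erase_of_mem (Finset.mem_univ j),
      Finset.card_univ, Fintype.card_fin]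
    simp only [if_true]
    ring
  simp_rw [key]
  rw [Finset.sum_const, Finset.card_univ, Fintype.card_fin, nsmul_eq_mul]
  ring

/-- For a Hermitian matrix, the self-contraction is the (real, nonneg) sum of squared norms. -/
lemma herm_contract_self {d : ℕ} {A : Matrix (Fin d) (Fin d) ℂ} (hA : A.IsHermitian) :
    (∑ a, ∑ b, A a b * A b a) = ((∑ a, ∑ b, Complex.normSq (A a b) : ℝ) : ℂ) := by
  push_cast
  refine Finset.sum_congr rfl fun a _ => Finset.sum_congr rfl fun b _ => ?_
  have hba : A b a = star (A a b) := by rw [← hA.apply a b, star_star]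
  rw [hba, RCLike.star_def, Complex.mul_conj]

lemma herm_contract_self_eq_zero {d : ℕ} {A : Matrix (Fin d) (Fin d) ℂ}
    (hA : A.IsHermitian) (h : (∑ a, ∑ b, A a b * A b a) = 0) : A = 0 := by
  rw [herm_contract_self hA] at h
  have h' : (∑ a, ∑ b, Complex.normSq (A a b) : ℝ) = 0 := by exact_mod_cast h
  ext a b
  have : ∀ a ∈ Finset.univ, (∑ b, Complex.normSq (A a b)) = 0 := by
    intro a _
    have := (Finset.sum_eq_zero_iff_of_nonneg (fun a _ =>
      Finset.sum_nonneg fun b _ => Complex.normSq_nonneg _)).mp h'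
    exact this a (Finset.mem_univ a)
  have h2 := (Finset.sum_eq_zero_iff_of_nonneg (fun b _ => Complex.normSq_nonneg _)).mp
    (this a (Finset.mem_univ a)) b (Finset.mem_univ b)
  simpa using Complex.normSq_eq_zero.mp h2

/-- Let `ρ ≠ 0` be a Hermitian matrix, `k ≥ 1`, and `v` Hermitian.
If `∑_{j=1}^{k} ρ^{⊗(j−1)} ⊗ v ⊗ ρ^{⊗(k−j)} = 0` then `v = 0`.  (Consequently the map
`ρ ↦ ρ^{⊗k}` is an immersion on the nonzero Hermitian matrices.) -/
theorem mixedTensorSum_eq_zero_imp {d k : ℕ} (hk : 1 ≤ k)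
    (ρ v : Matrix (Fin d) (Fin d) ℂ)
    (hρ : ρ.IsHermitian) (hρ0 : ρ ≠ 0) (hv : v.IsHermitian)
    (h : mixedTensorSum k ρ v = 0) :
    v = 0 := by
  have hcontr : ∀ M : Matrix (Fin d) (Fin d) ℂ,
      (k : ℂ) * (∑ a, ∑ b, ρ a b * M b a) ^ (k - 1) * (∑ a, ∑ b, v a b * M b a) = 0 := by
    intro M
    rw [← mixedTensorSum_contract, h]
    simp
  have hk0 : (k : ℂ) ≠ 0 := Nat.cast_ne_zero.mpr (by omega)
  have hρρ : (∑ a, ∑ b, ρ a b * ρ b a) ≠ 0 := by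
    intro hz
    exact hρ0 (herm_contract_self_eq_zero hρ hz)
  -- Step 1: tr(vρ) = 0
  have h1 : (∑ a, ∑ b, v a b * ρ b a) = 0 := by
    have := hcontr ρ
    rcases mul_eq_zero.mp this with h' | h'
    · rcases mul_eq_zero.mp h' with h'' | h''
      · exact absurd h'' hk0
      · exact absurd (pow_eq_zero_iff'.mp h'').1 hρρ
    · exact h'
  -- symmetry of contraction
  have hsym : (∑ a, ∑ b, ρ a b * v b a) = (∑ a, ∑ b, v a b * ρ b a) := by
    rw [Finset.sum_comm]
    exact Finset.sum_congr rfl fun a _ => Finset.sum_congr rfl fun b _ => mul_comm _ _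
  -- Step 2: use M = ρ + v
  have h2 := hcontr (ρ + v)
  have hρM : (∑ a, ∑ b, ρ a b * (ρ + v) b a) = (∑ a, ∑ b, ρ a b * ρ b a) := by
    simp only [Matrix.add_apply, mul_add, Finset.sum_add_distrib]
    rw [hsym, h1, add_zero]
  have hvM : (∑ a, ∑ b, v a b * (ρ + v) b a) = (∑ a, ∑ b, v a b * v b a) := by
    simp only [Matrix.add_apply, mul_add, Finset.sum_add_distrib]
    rw [h1, zero_add]
  rw [hρM, hvM] at h2
  rcases mul_eq_zero.mp h2 with h' | h'
  · rcases mul_eq_zero.mp h' with h'' | h''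
    · exact absurd h'' hk0
    · exact absurd (pow_eq_zero_iff'.mp h'').1 hρρ
  · exact herm_contract_self_eq_zero hv h'
end

section
/- Let α = ∑_{i=1}^{r} λ_i e_i ⊗ f_i be a unit vector in H_A ⊗ H_B in Schmidt form, O a Hermitian operator on H_A, S a Hermitian operator on H_B, U a unitary on H_B, and P_α := ∑_{i=1}^{r} λ_i |e_i⟩⟨f_i| the operator from H_B to H_A. Then tr((O ⊗ U S U†) |α⟩⟨α|) = tr((P_α U)† O^T (P_α U) S), where O^T denotes the transpose of O with respect to the basis {e_i}. -/
open Matrix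

section Helpers

set_option linter.unusedSectionVars false

variable {m n p : Type*} [Fintype m] [Fintype n] [Fintype p]

private lemma trace_vecMulVec' (u v : n → ℂ) : (vecMulVec u v).trace = u ⬝ᵥ v := by
  simp [Matrix.trace, Matrix.diag, vecMulVec_apply, dotProduct]

private lemma vecMulVec_mul' (u : m → ℂ) (v : n → ℂ) (M : Matrix n p ℂ) :
    vecMulVec u v * M = vecMulVec u (v ᵥ* M) := by
  ext i j
  simp [Matrix.mul_apply, vecMulVec_apply, Matrix.vecMul, dotProduct, Finset.mul_sum, mul_assoc]

private lemma mul_vecMulVec' (M : Matrix m n ℂ) (u : n → ℂ) (v : p → ℂ) :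
    M * vecMulVec u v = vecMulVec (M *ᵥ u) v := by
  ext i j
  simp only [Matrix.mul_apply, vecMulVec_apply, Matrix.mulVec, dotProduct, Finset.sum_mul]
  exact Finset.sum_congr rfl fun k _ => by ring

private lemma vecMulVec_mul_vecMulVec' (u : m → ℂ) (v : n → ℂ) (w : n → ℂ) (z : p → ℂ) :
    vecMulVec u v * vecMulVec w z = (v ⬝ᵥ w) • vecMulVec u z := by
  ext i j
  simp only [Matrix.mul_apply, vecMulVec_apply, Matrix.smul_apply, smul_eq_mul, dotProduct,
    Finset.sum_mul]
  exact Finset.sum_congr rfl fun k _ => by ring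

private lemma conjTranspose_vecMulVec' (u : m → ℂ) (v : n → ℂ) :
    (vecMulVec u v)ᴴ = vecMulVec (star v) (star u) := by
  ext i j
  simp [conjTranspose_apply, vecMulVec_apply, mul_comm]

private lemma sum_dotProduct' {ι : Type*} (s : Finset ι) (v : ι → n → ℂ) (w : n → ℂ) :
    (∑ i ∈ s, v i) ⬝ᵥ w = ∑ i ∈ s, v i ⬝ᵥ w := by
  simp only [dotProduct, Finset.sum_apply, Finset.sum_mul]
  exact Finset.sum_comm

private lemma dotProduct_sum' {ι : Type*} (s : Finset ι) (v : n → ℂ) (w : ι → n → ℂ) :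
    v ⬝ᵥ (∑ i ∈ s, w i) = ∑ i ∈ s, v ⬝ᵥ w i := by
  simp only [dotProduct, Finset.sum_apply, Finset.mul_sum]
  exact Finset.sum_comm

private lemma mulVec_sum' {ι : Type*} (s : Finset ι) (M : Matrix m n ℂ) (v : ι → n → ℂ) :
    M *ᵥ (∑ i ∈ s, v i) = ∑ i ∈ s, M *ᵥ v i := by
  funext x
  simp only [Matrix.mulVec, dotProduct, Finset.sum_apply, Finset.mul_sum]
  exact Finset.sum_comm

private lemma kron_mulVec' {a b : ℕ} (O : Matrix (Fin a) (Fin a) ℂ) (V : Matrix (Fin b) (Fin b) ℂ)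
    (u : Fin a → ℂ) (v : Fin b → ℂ) :
    (Matrix.kroneckerMap (· * ·) O V) *ᵥ (fun p : Fin a × Fin b => u p.1 * v p.2) =
      fun p => (O *ᵥ u) p.1 * (V *ᵥ v) p.2 := by
  funext p
  simp only [Matrix.mulVec, dotProduct, kroneckerMap_apply, Fintype.sum_prod_type,
    Finset.mul_sum, Finset.sum_mul]
  rw [Finset.sum_comm]
  refine Finset.sum_congr rfl fun x _ => Finset.sum_congr rfl fun y _ => by ring

private lemma dot_factor' {a b : ℕ} (u w : Fin a → ℂ) (v z : Fin b → ℂ) :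
    (fun p : Fin a × Fin b => u p.1 * v p.2) ⬝ᵥ (fun p : Fin a × Fin b => w p.1 * z p.2) =
      (u ⬝ᵥ w) * (v ⬝ᵥ z) := by
  simp only [dotProduct, Fintype.sum_prod_type, Finset.mul_sum, Finset.sum_mul]
  rw [Finset.sum_comm]
  refine Finset.sum_congr rfl fun x _ => Finset.sum_congr rfl fun y _ => by ring

end Helpers

/-- Let `α = ∑_{i=1}^{r} λ_i e_i ⊗ f_i` be a unit vector in Schmidt form
(`e`, `f` orthonormal families, `λ_i > 0`), `O` Hermitian on `H_A`, `S` Hermitian on `H_B`,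
`U` unitary on `H_B`, `P_α = ∑ λ_i |e_i⟩⟨f_i|`, and `O^T` the transpose of `O` with respect
to the basis `{e_i}` (i.e. `⟨e_i|O^T|e_j⟩ = ⟨e_j|O|e_i⟩`).  Then
`tr((O ⊗ U S U†) |α⟩⟨α|) = tr((P_α U)† O^T (P_α U) S)`. -/
theorem schmidt_trace_identity {a b r : ℕ}
    (e : Fin r → (Fin a → ℂ)) (f : Fin r → (Fin b → ℂ))
    (he : ∀ i j, star (e i) ⬝ᵥ e j = if i = j then 1 else 0)
    (hf : ∀ i j, star (f i) ⬝ᵥ f j = if i = j then 1 else 0)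
    (lam : Fin r → ℝ) (hlam : ∀ i, 0 < lam i)
    (α : Fin a × Fin b → ℂ)
    (hα : ∀ p, α p = ∑ i, (lam i : ℂ) * e i p.1 * f i p.2)
    (hunit : star α ⬝ᵥ α = 1)
    (O : Matrix (Fin a) (Fin a) ℂ) (hO : O.IsHermitian)
    (S : Matrix (Fin b) (Fin b) ℂ) (hS : S.IsHermitian)
    (U : Matrix (Fin b) (Fin b) ℂ) (hU : U ∈ Matrix.unitaryGroup (Fin b) ℂ)
    (P : Matrix (Fin a) (Fin b) ℂ)
    (hP : ∀ x y, P x y = ∑ i, (lam i : ℂ) * e i x * (starRingEnd ℂ) (f i y))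
    (OT : Matrix (Fin a) (Fin a) ℂ)
    (hOT : ∀ i j, star (e i) ⬝ᵥ (OT *ᵥ e j) = star (e j) ⬝ᵥ (O *ᵥ e i)) :
    (Matrix.kroneckerMap (· * ·) O (U * S * star U) *
        Matrix.vecMulVec α (star α)).trace =
      ((P * U)ᴴ * OT * (P * U) * S).trace := by
  set V : Matrix (Fin b) (Fin b) ℂ := U * S * star U with hV
  set K := Matrix.kroneckerMap (· * ·) O V with hK
  set g : Fin r → (Fin a × Fin b → ℂ) := fun i p => e i p.1 * f i p.2 with hg
  have hαsum : α = ∑ i, (lam i : ℂ) • g i := by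
    funext p
    rw [hα]
    simp only [Finset.sum_apply, Pi.smul_apply, smul_eq_mul, hg, mul_assoc]
  have hstarg : ∀ i, star (g i) = fun p : Fin a × Fin b => star (e i) p.1 * star (f i) p.2 := by
    intro i
    funext p
    simp [hg]
  -- LHS computation
  have hLHS : (K * Matrix.vecMulVec α (star α)).trace =
      ∑ i, ∑ j, (lam i : ℂ) * (lam j : ℂ) *
        (star (e i) ⬝ᵥ (O *ᵥ e j)) * (star (f i) ⬝ᵥ (V *ᵥ f j)) := by
    rw [mul_vecMulVec', trace_vecMulVec', hαsum]
    have hstar : star (∑ i, (lam i : ℂ) • g i) = ∑ i, (lam i : ℂ) • star (g i) := by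
      rw [star_sum]
      refine Finset.sum_congr rfl fun i _ => ?_
      rw [star_smul]
      simp [Complex.star_def, Complex.conj_ofReal]
    rw [hstar]
    have hmv : K *ᵥ (∑ i, (lam i : ℂ) • g i) = ∑ j, (lam j : ℂ) • (K *ᵥ g j) := by
      rw [mulVec_sum']
      exact Finset.sum_congr rfl fun j _ => by rw [mulVec_smul]
    rw [hmv, sum_dotProduct']
    have step : ∀ j : Fin r, ((lam j : ℂ) • (K *ᵥ g j)) ⬝ᵥ (∑ i, (lam i : ℂ) • star (g i)) =
        ∑ i, (lam i : ℂ) * (lam j : ℂ) *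
          (star (e i) ⬝ᵥ (O *ᵥ e j)) * (star (f i) ⬝ᵥ (V *ᵥ f j)) := by
      intro j
      rw [dotProduct_sum']
      refine Finset.sum_congr rfl fun i _ => ?_
      have hKg : K *ᵥ g j = fun p : Fin a × Fin b => (O *ᵥ e j) p.1 * (V *ᵥ f j) p.2 := by
        rw [hK, hg]
        exact kron_mulVec' O V (e j) (f j)
      rw [smul_dotProduct, dotProduct_smul, hKg, hstarg i, dot_factor',
        dotProduct_comm ((O *ᵥ e j)) (star (e i)), dotProduct_comm ((V *ᵥ f j)) (star (f i))]
      simp only [smul_eq_mul]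
      ring
    rw [Finset.sum_congr rfl fun j _ => step j, Finset.sum_comm]
  -- rank-one decomposition of P
  have hPsum : P = ∑ i, (lam i : ℂ) • Matrix.vecMulVec (e i) (star (f i)) := by
    ext x y
    rw [hP]
    simp only [Finset.sum_apply, Matrix.sum_apply, Matrix.smul_apply, vecMulVec_apply,
      smul_eq_mul, Pi.star_apply, Complex.star_def, mul_assoc]
  have hcyc : ((P * U)ᴴ * OT * (P * U) * S).trace = (Pᴴ * OT * P * V).trace := by
    rw [conjTranspose_mul]
    simp only [Matrix.mul_assoc]
    rw [Matrix.trace_mul_comm]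
    simp only [Matrix.mul_assoc, hV, Matrix.star_eq_conjTranspose]
  have hRHS : (Pᴴ * OT * P * V).trace =
      ∑ i, ∑ j, (lam i : ℂ) * (lam j : ℂ) *
        (star (e i) ⬝ᵥ (OT *ᵥ e j)) * ((V *ᵥ f i) ⬝ᵥ star (f j)) := by
    rw [hPsum]
    simp only [conjTranspose_sum]
    simp only [conjTranspose_smul, conjTranspose_vecMulVec', star_star, Matrix.sum_mul,
      Matrix.mul_sum, Matrix.smul_mul, Matrix.mul_smul, trace_sum, trace_smul, smul_smul,
      smul_eq_mul, Complex.star_def, Complex.conj_ofReal, Finset.mul_sum]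
    rw [Finset.sum_comm]
    refine Finset.sum_congr rfl fun i _ => Finset.sum_congr rfl fun j _ => ?_
    rw [vecMulVec_mul' (f i) (star (e i)) OT,
      vecMulVec_mul_vecMulVec' (f i) (star (e i) ᵥ* OT) (e j) (star (f j)),
      Matrix.smul_mul, trace_smul, vecMulVec_mul', trace_vecMulVec', smul_eq_mul,
      ← Matrix.dotProduct_mulVec]
    have hfv : f i ⬝ᵥ (star (f j) ᵥ* V) = (V *ᵥ f i) ⬝ᵥ star (f j) := by
      rw [dotProduct_comm, ← Matrix.dotProduct_mulVec, dotProduct_comm]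
    rw [hfv]
    ring
  rw [hLHS, hcyc, hRHS, Finset.sum_comm]
  refine Finset.sum_congr rfl fun i _ => Finset.sum_congr rfl fun j _ => ?_
  rw [hOT i j, dotProduct_comm ((V *ᵥ f i)) (star (f j))]
  ring
end

section
/- Let M ∈ ℂ^{r×n} with r ≤ n have full rank r, and flatten it into a sequence M_1,...,M_{nr} (setting M_k = 0 for k > nr). For k ≥ 1 define G_k(M) := ∑_{i : 1 ≤ i ≤ k+1−i} M_i · conj(M_{k+1−i}). If two full-rank matrices M, M' satisfy G_k(M) = G_k(M') for all k ∈ {1,...,nr+n−1}, then there exists φ ∈ ℝ with M' = e^{iφ} M. -/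
open Finset

private lemma prf_row_exists_ne {r n : ℕ} (A : Matrix (Fin r) (Fin n) ℂ)
    (hA : A.rank = r) (i : Fin r) : ∃ j, A i j ≠ 0 := by
  by_contra h
  push_neg at h
  have htop : LinearMap.range A.mulVecLin = ⊤ := by
    apply Submodule.eq_top_of_finrank_eq
    rw [← Matrix.rank, hA, Module.finrank_fin_fun]
  obtain ⟨x, hx⟩ := LinearMap.range_eq_top.mp htop (Pi.single i 1)
  have h1 : A.mulVec x i = 1 := by
    have : A.mulVecLin x = A.mulVec x := rfl
    rw [this] at hx; rw [hx]; simp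
  simp [Matrix.mulVec, dotProduct, h] at h1

private lemma prf_sum_lt_zero (h : ℕ → ℂ) (m k : ℕ) (hmin : ∀ j, j < m → h j = 0)
    (hk : k + 1 < 2 * m) :
    ∑ i ∈ (Finset.Icc 1 k).filter (fun i => 2 * i ≤ k + 1),
      h i * (starRingEnd ℂ) (h (k + 1 - i)) = 0 := by
  refine Finset.sum_eq_zero fun i hi => ?_
  simp only [Finset.mem_filter, Finset.mem_Icc] at hi
  rw [hmin i (by omega), zero_mul]

private lemma prf_sum_diag (h : ℕ → ℂ) (m : ℕ) (hm : 1 ≤ m) (hmin : ∀ j, j < m → h j = 0) :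
    ∑ i ∈ (Finset.Icc 1 (2 * m - 1)).filter (fun i => 2 * i ≤ 2 * m - 1 + 1),
      h i * (starRingEnd ℂ) (h (2 * m - 1 + 1 - i)) = h m * (starRingEnd ℂ) (h m) := by
  rw [Finset.sum_eq_single m]
  · rw [show 2 * m - 1 + 1 - m = m by omega]
  · intro i hi hne
    simp only [Finset.mem_filter, Finset.mem_Icc] at hi
    rw [hmin i (by omega), zero_mul]
  · intro hm'
    exact absurd (by simp only [Finset.mem_filter, Finset.mem_Icc]; omega) hm'

/-- Flatten a full-rank matrix `M ∈ ℂ^{r×n}` (`1 ≤ r ≤ n`) into a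
sequence `M_1,...,M_{nr}` (with `M_k = 0` for `k > nr` and `M_0 = 0`), and for `k ≥ 1` set
`G_k(M) := ∑_{1 ≤ i ≤ k+1−i} M_i · conj(M_{k+1−i})`.  If two full-rank matrices `M, M'`
satisfy `G_k(M) = G_k(M')` for all `k ∈ {1,...,nr+n−1}`, then `M' = e^{iφ} M` for some
`φ ∈ ℝ`. -/
theorem phase_recovery_from_products {r n : ℕ} (hr : 1 ≤ r) (hrn : r ≤ n)
    (A B : Matrix (Fin r) (Fin n) ℂ)
    (hA : A.rank = r) (hB : B.rank = r)
    (f g : ℕ → ℂ)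
    (hf : ∀ (i : Fin r) (j : Fin n), f (n * (i : ℕ) + (j : ℕ) + 1) = A i j)
    (hf0 : ∀ k : ℕ, k = 0 ∨ n * r < k → f k = 0)
    (hg : ∀ (i : Fin r) (j : Fin n), g (n * (i : ℕ) + (j : ℕ) + 1) = B i j)
    (hg0 : ∀ k : ℕ, k = 0 ∨ n * r < k → g k = 0)
    (hG : ∀ k ∈ Finset.Icc 1 (n * r + n - 1),
      ∑ i ∈ (Finset.Icc 1 k).filter (fun i => 2 * i ≤ k + 1),
          f i * (starRingEnd ℂ) (f (k + 1 - i))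
        = ∑ i ∈ (Finset.Icc 1 k).filter (fun i => 2 * i ≤ k + 1),
            g i * (starRingEnd ℂ) (g (k + 1 - i))) :
    ∃ φ : ℝ, B = Complex.exp (φ * Complex.I) • A := by
  classical
  have hn : 1 ≤ n := hr.trans hrn
  have hnnr : n ≤ n * r := Nat.le_mul_of_pos_right n hr
  set i0 : Fin r := ⟨0, hr⟩ with hi0
  obtain ⟨j0, hj0⟩ := prf_row_exists_ne A hA i0
  obtain ⟨j1, hj1⟩ := prf_row_exists_ne B hB i0
  have hfex : ∃ k, f k ≠ 0 := ⟨n * (i0 : ℕ) + (j0 : ℕ) + 1, by rw [hf i0 j0]; exact hj0⟩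
  have hgex : ∃ k, g k ≠ 0 := ⟨n * (i0 : ℕ) + (j1 : ℕ) + 1, by rw [hg i0 j1]; exact hj1⟩
  set m := Nat.find hfex with hmdef
  set m' := Nat.find hgex with hm'def
  have hfm : f m ≠ 0 := Nat.find_spec hfex
  have hgm : g m' ≠ 0 := Nat.find_spec hgex
  have hminf : ∀ j, j < m → f j = 0 := fun j hj => by
    have := Nat.find_min hfex hj; simpa using this
  have hming : ∀ j, j < m' → g j = 0 := fun j hj => by
    have := Nat.find_min hgex hj; simpa using this
  have hm1 : 1 ≤ m := by
    rcases Nat.eq_zero_or_pos m with h0 | h; · exact absurd (by rw [h0]; exact hf0 0 (Or.inl rfl)) hfm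
    · exact h
  have hm'1 : 1 ≤ m' := by
    rcases Nat.eq_zero_or_pos m' with h0 | h; · exact absurd (by rw [h0]; exact hg0 0 (Or.inl rfl)) hgm
    · exact h
  have hmn : m ≤ n := by
    have h1 : m ≤ n * (i0 : ℕ) + (j0 : ℕ) + 1 := Nat.find_le (by rw [hf i0 j0]; exact hj0)
    have h3 : (j0 : ℕ) < n := j0.isLt
    simp only [hi0] at h1
    omega
  have hm'n : m' ≤ n := by
    have h1 : m' ≤ n * (i0 : ℕ) + (j1 : ℕ) + 1 := Nat.find_le (by rw [hg i0 j1]; exact hj1)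
    have h3 : (j1 : ℕ) < n := j1.isLt
    simp only [hi0] at h1
    omega
  have hfmne : f m * (starRingEnd ℂ) (f m) ≠ 0 :=
    mul_ne_zero hfm ((map_ne_zero (starRingEnd ℂ)).mpr hfm)
  have hgmne : g m' * (starRingEnd ℂ) (g m') ≠ 0 :=
    mul_ne_zero hgm ((map_ne_zero (starRingEnd ℂ)).mpr hgm)
  -- m = m'
  have hmm' : m = m' := by
    by_contra hne
    rcases Nat.lt_or_ge m m' with hlt | hge
    · have hk : 2 * m - 1 ∈ Finset.Icc 1 (n * r + n - 1) := by
        simp only [Finset.mem_Icc]; omega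
      have := hG _ hk
      rw [prf_sum_diag f m hm1 hminf, prf_sum_lt_zero g m' (2 * m - 1) hming (by omega)] at this
      exact hfmne this
    · have hlt : m' < m := by omega
      have hk : 2 * m' - 1 ∈ Finset.Icc 1 (n * r + n - 1) := by
        simp only [Finset.mem_Icc]; omega
      have := hG _ hk
      rw [prf_sum_diag g m' hm'1 hming, prf_sum_lt_zero f m (2 * m' - 1) hminf (by omega)] at this
      exact hgmne this.symm
  clear_value m m'
  subst hmm'
  -- the phase
  have hdiag : f m * (starRingEnd ℂ) (f m) = g m * (starRingEnd ℂ) (g m) := by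
    have hk : 2 * m - 1 ∈ Finset.Icc 1 (n * r + n - 1) := by
      simp only [Finset.mem_Icc]; omega
    have := hG _ hk
    rwa [prf_sum_diag f m hm1 hminf, prf_sum_diag g m hm1 hming] at this
  have habs : ‖g m / f m‖ = 1 := by
    have h1 : Complex.normSq (f m) = Complex.normSq (g m) := by
      have := hdiag
      rw [Complex.mul_conj, Complex.mul_conj] at this
      exact_mod_cast this
    have h2 : ‖f m‖ = ‖g m‖ := by
      rw [← Real.sqrt_sq (norm_nonneg (f m)), ← Real.sqrt_sq (norm_nonneg (g m)),
        Complex.sq_norm, Complex.sq_norm, h1]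
    rw [norm_div, ← h2, div_self (norm_ne_zero_iff.mpr hfm)]
  obtain ⟨φ, hφ⟩ := (Complex.norm_eq_one_iff _).mp habs
  set c := Complex.exp (φ * Complex.I) with hcdef
  have hc : g m = c * f m := ((eq_div_iff hfm).mp hφ).symm
  have hcabs : ‖c‖ = 1 := Complex.norm_exp_ofReal_mul_I φ
  have hcc : (starRingEnd ℂ) c * c = 1 := by
    rw [mul_comm, Complex.mul_conj, ← Complex.sq_norm, hcabs]; norm_num
  -- strong induction: g l = c * f l for all l
  have key : ∀ l, g l = c * f l := by
    intro l
    induction l using Nat.strong_induction_on with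
    | _ l IH =>
      rcases lt_trichotomy l m with hlm | rfl | hml
      · rw [hminf l hlm, hming l hlm, mul_zero]
      · exact hc
      · by_cases hl : n * r < l
        · rw [hf0 l (Or.inr hl), hg0 l (Or.inr hl), mul_zero]
        · push_neg at hl
          set k := m + l - 1 with hkdef
          have hk : k ∈ Finset.Icc 1 (n * r + n - 1) := by
            simp only [Finset.mem_Icc]; omega
          have hGk := hG _ hk
          have hmT : m ∈ (Finset.Icc 1 k).filter (fun i => 2 * i ≤ k + 1) := by
            simp only [Finset.mem_filter, Finset.mem_Icc]; omega
          rw [← Finset.add_sum_erase _ _ hmT, ← Finset.add_sum_erase _ _ hmT] at hGk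
          have hrest : ∑ i ∈ ((Finset.Icc 1 k).filter (fun i => 2 * i ≤ k + 1)).erase m,
                g i * (starRingEnd ℂ) (g (k + 1 - i))
              = ∑ i ∈ ((Finset.Icc 1 k).filter (fun i => 2 * i ≤ k + 1)).erase m,
                f i * (starRingEnd ℂ) (f (k + 1 - i)) := by
            refine Finset.sum_congr rfl fun i hi => ?_
            rw [Finset.mem_erase, Finset.mem_filter, Finset.mem_Icc] at hi
            rcases Nat.lt_or_ge i m with him | him
            · rw [hminf i him, hming i him, zero_mul, zero_mul]
            · have himl : m < i := by omega
              have hil : i < l := by omega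
              have hi2 : k + 1 - i < l := by omega
              rw [IH i hil, IH (k + 1 - i) hi2, map_mul]
              linear_combination (f i * (starRingEnd ℂ) (f (k + 1 - i))) * hcc
          rw [hrest] at hGk
          have heq : f m * (starRingEnd ℂ) (f l) = g m * (starRingEnd ℂ) (g l) := by
            have h1 : k + 1 - m = l := by omega
            have := add_right_cancel hGk
            rwa [h1] at this
          rw [hc] at heq
          have heq2 : (starRingEnd ℂ) (f l) = c * (starRingEnd ℂ) (g l) := by
            apply mul_left_cancel₀ hfm
            linear_combination heq
          have : (starRingEnd ℂ) (g l) = (starRingEnd ℂ) (c * f l) := by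
            rw [map_mul]
            have : (starRingEnd ℂ) c * ((starRingEnd ℂ) c * c) = (starRingEnd ℂ) c := by
              rw [hcc, mul_one]
            calc (starRingEnd ℂ) (g l) = (starRingEnd ℂ) c * (c * (starRingEnd ℂ) (g l)) := by
                  rw [← mul_assoc, hcc, one_mul]
              _ = (starRingEnd ℂ) c * (starRingEnd ℂ) (f l) := by rw [← heq2]
          exact (starRingEnd ℂ).injective this
  refine ⟨φ, ?_⟩
  ext i j
  have := key (n * (i : ℕ) + (j : ℕ) + 1)
  rw [hf i j, hg i j] at this
  rw [Matrix.smul_apply, smul_eq_mul, this]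
end
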